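/- Let θ > 0 and let x₁, …, xₙ ∈ ℝ × [0,∞) be a sample of intervals such that the two-dimensional points (mid x₁, spr x₁), …, (mid xₙ, spr xₙ) are not all contained in a single straight line of ℝ². Then the sample d_θ-median is unique, i.e. the function (y,z) ↦ (1/n)·∑_{i=1}^n sqrt((mid xᵢ − y)² + θ·(spr xᵢ − z)²) has exactly one minimizer over ℝ × [0,∞). -/

import Mathlib

lemma cross_eq_zero_of_sameRay' (A P Q : ℂ) (h : SameRay ℝ (A - P) (A - Q)) :
    (A.re - P.re) * (Q.im - P.im) - (A.im - P.im) * (Q.re - P.re) = 0 := by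
  rcases h with h | h | ⟨r₁, r₂, hr₁, hr₂, hr⟩
  · have : A = P := sub_eq_zero.mp h
    rw [this]; ring
  · have : A = Q := sub_eq_zero.mp h
    rw [this]; ring
  · have h1 : r₁ * (A.re - P.re) = r₂ * (A.re - Q.re) := by
      have := congrArg Complex.re hr
      simpa [Complex.smul_re] using this
    have h2 : r₁ * (A.im - P.im) = r₂ * (A.im - Q.im) := by
      have := congrArg Complex.im hr
      simpa [Complex.smul_im] using this
    have hr₂' : r₂ ≠ 0 := ne_of_gt hr₂
    have key : r₂ * ((A.re - P.re) * (Q.im - P.im) - (A.im - P.im) * (Q.re - P.re)) = 0 := by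
      linear_combination (A.re - P.re) * h2 - (A.im - P.im) * h1
    exact (mul_eq_zero.mp key).resolve_left hr₂'

theorem sample_dTheta_median_unique
    (θ : ℝ) (hθ : 0 < θ) (n : ℕ)
    (x : Fin n → ℝ × ℝ) (hx : ∀ i, 0 ≤ (x i).2)
    (hnotline : ¬ ∃ a b c : ℝ, (a, b) ≠ ((0 : ℝ), (0 : ℝ)) ∧
      ∀ i, a * (x i).1 + b * (x i).2 = c) :
    ∃! m : ℝ × ℝ, 0 ≤ m.2 ∧ ∀ p : ℝ × ℝ, 0 ≤ p.2 →
      (1 / (n : ℝ)) * ∑ i, Real.sqrt (((x i).1 - m.1) ^ 2 + θ * ((x i).2 - m.2) ^ 2)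
        ≤ (1 / (n : ℝ)) * ∑ i, Real.sqrt (((x i).1 - p.1) ^ 2 + θ * ((x i).2 - p.2) ^ 2) := by
  -- n is positive
  have hn : 0 < n := by
    rcases Nat.eq_zero_or_pos n with h | h
    · exfalso
      apply hnotline
      refine ⟨1, 0, 0, by simp, fun i => ?_⟩
      exact absurd i.2 (by omega)
    · exact h
  set s : ℝ := Real.sqrt θ with hs_def
  have hs : 0 < s := Real.sqrt_pos.mpr hθ
  have hs2 : s ^ 2 = θ := Real.sq_sqrt hθ.le
  -- embed into ℂ
  set φ : ℝ × ℝ → ℂ := fun p => (p.1 : ℂ) + (s * p.2 : ℝ) * Complex.I with hφ_def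
  have hφre : ∀ p : ℝ × ℝ, (φ p).re = p.1 := by intro p; simp [hφ_def]
  have hφim : ∀ p : ℝ × ℝ, (φ p).im = s * p.2 := by intro p; simp [hφ_def]
  -- the objective (without 1/n)
  set F : ℝ × ℝ → ℝ := fun p => ∑ i, ‖φ (x i) - φ p‖ with hF_def
  -- key identity for the terms
  have hterm : ∀ (i : Fin n) (p : ℝ × ℝ),
      Real.sqrt (((x i).1 - p.1) ^ 2 + θ * ((x i).2 - p.2) ^ 2) = ‖φ (x i) - φ p‖ := by
    intro i p
    rw [Complex.norm_def, Complex.normSq_apply]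
    have h1 : (φ (x i) - φ p).re = (x i).1 - p.1 := by
      simp [Complex.sub_re, hφre]
    have h2 : (φ (x i) - φ p).im = s * ((x i).2 - p.2) := by
      simp [Complex.sub_im, hφim]; ring
    rw [h1, h2]
    congr 1
    have : s * ((x i).2 - p.2) * (s * ((x i).2 - p.2)) = s ^ 2 * ((x i).2 - p.2) ^ 2 := by ring
    rw [this, hs2]; ring
  have hsum : ∀ p : ℝ × ℝ,
      ∑ i, Real.sqrt (((x i).1 - p.1) ^ 2 + θ * ((x i).2 - p.2) ^ 2) = F p := by
    intro p
    exact Finset.sum_congr rfl fun i _ => hterm i p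
  -- reduce to F
  have hiff : ∀ m : ℝ × ℝ,
      (0 ≤ m.2 ∧ ∀ p : ℝ × ℝ, 0 ≤ p.2 → F m ≤ F p) ↔
      (0 ≤ m.2 ∧ ∀ p : ℝ × ℝ, 0 ≤ p.2 →
        (1 / (n : ℝ)) * ∑ i, Real.sqrt (((x i).1 - m.1) ^ 2 + θ * ((x i).2 - m.2) ^ 2)
          ≤ (1 / (n : ℝ)) * ∑ i, Real.sqrt (((x i).1 - p.1) ^ 2 + θ * ((x i).2 - p.2) ^ 2)) := by
    intro m
    have hn' : (0 : ℝ) < 1 / (n : ℝ) := by positivity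
    constructor
    · rintro ⟨h1, h2⟩
      refine ⟨h1, fun p hp => ?_⟩
      rw [hsum, hsum]
      exact mul_le_mul_of_nonneg_left (h2 p hp) hn'.le
    · rintro ⟨h1, h2⟩
      refine ⟨h1, fun p hp => ?_⟩
      have := h2 p hp
      rw [hsum, hsum] at this
      exact le_of_mul_le_mul_left this hn'
  rw [← existsUnique_congr hiff]
  -- continuity of F
  have hφcont : Continuous φ := by
    apply Continuous.add
    · exact Complex.continuous_ofReal.comp continuous_fst
    · exact (Complex.continuous_ofReal.comp (continuous_const.mul continuous_snd)).mul
        continuous_const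
  have hFcont : Continuous F := by
    apply continuous_finset_sum
    intro i _
    exact ((continuous_const.sub hφcont).norm)
  -- lower bounds for F
  have hFterm_le : ∀ (j : Fin n) (p : ℝ × ℝ), ‖φ (x j) - φ p‖ ≤ F p := by
    intro j p
    exact Finset.single_le_sum (f := fun i => ‖φ (x i) - φ p‖)
      (fun i _ => norm_nonneg _) (Finset.mem_univ j)
  have hFnonneg : ∀ p, 0 ≤ F p := fun p =>
    Finset.sum_nonneg fun i _ => norm_nonneg _
  -- existence via compact sublevel set
  set j0 : Fin n := ⟨0, hn⟩ with hj0
  set p₀ : ℝ × ℝ := x j0 with hp₀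
  set K : Set (ℝ × ℝ) := {p | 0 ≤ p.2} ∩ {p | F p ≤ F p₀} with hK_def
  have hKclosed : IsClosed K := by
    apply IsClosed.inter
    · exact isClosed_le continuous_const continuous_snd
    · exact isClosed_le hFcont continuous_const
  have hKsub : K ⊆ Metric.closedBall p₀ (F p₀ + F p₀ / s) := by
    rintro p ⟨-, hp2⟩
    have h1 : |(x j0).1 - p.1| ≤ F p := by
      calc |(x j0).1 - p.1| = |(φ (x j0) - φ p).re| := by
            rw [Complex.sub_re, hφre, hφre]
        _ ≤ ‖φ (x j0) - φ p‖ := by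
            exact Complex.abs_re_le_norm _
        _ ≤ F p := hFterm_le j0 p
    have h2 : s * |(x j0).2 - p.2| ≤ F p := by
      calc s * |(x j0).2 - p.2| = |(φ (x j0) - φ p).im| := by
            rw [Complex.sub_im, hφim, hφim, ← mul_sub, abs_mul, abs_of_pos hs]
        _ ≤ ‖φ (x j0) - φ p‖ := by
            exact Complex.abs_im_le_norm _
        _ ≤ F p := hFterm_le j0 p
    rw [Metric.mem_closedBall, Prod.dist_eq]
    have hd1 : dist p.1 p₀.1 ≤ F p₀ := by
      rw [Real.dist_eq, abs_sub_comm]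
      exact le_trans h1 hp2
    have hd2 : dist p.2 p₀.2 ≤ F p₀ / s := by
      rw [Real.dist_eq, abs_sub_comm, le_div_iff₀ hs, mul_comm]
      exact le_trans h2 hp2
    have hpos : 0 ≤ F p₀ / s := by positivity
    exact max_le (le_trans hd1 (le_add_of_nonneg_right hpos))
      (le_trans hd2 (le_add_of_nonneg_left (hFnonneg p₀)))
  have hKcompact : IsCompact K :=
    (isCompact_closedBall p₀ (F p₀ + F p₀ / s)).of_isClosed_subset hKclosed hKsub
  have hp₀K : p₀ ∈ K := ⟨hx j0, le_refl (F p₀)⟩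
  obtain ⟨m, hmK, hmmin⟩ := hKcompact.exists_isMinOn ⟨p₀, hp₀K⟩ hFcont.continuousOn
  have hmin : ∀ p : ℝ × ℝ, 0 ≤ p.2 → F m ≤ F p := by
    intro p hp
    by_cases h : F p ≤ F p₀
    · exact hmmin ⟨hp, h⟩
    · exact le_trans (hmmin hp₀K) (le_of_not_ge h)
  -- strict midpoint convexity
  have hstrict : ∀ p q : ℝ × ℝ, p ≠ q →
      F ((p.1 + q.1) / 2, (p.2 + q.2) / 2) < (F p + F q) / 2 := by
    intro p q hpq
    set mid : ℝ × ℝ := ((p.1 + q.1) / 2, (p.2 + q.2) / 2) with hmid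
    have hφmid : ∀ i : Fin n,
        φ (x i) - φ mid = ((φ (x i) - φ p) + (φ (x i) - φ q)) / 2 := by
      intro i
      apply Complex.ext
      · simp [Complex.sub_re, Complex.add_re, Complex.div_re, hφre, hmid,
          Complex.normSq_apply]
        ring
      · simp [Complex.sub_im, Complex.add_im, Complex.div_im, hφim, hmid,
          Complex.normSq_apply]
        ring
    -- a witness index not on the line through p and q
    have hwit : ∃ i : Fin n, ¬ SameRay ℝ (φ (x i) - φ p) (φ (x i) - φ q) := by
      by_contra hall
      push_neg at hall
      apply hnotline
      refine ⟨s * (q.2 - p.2), -(s * (q.1 - p.1)),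
        s * (p.1 * (q.2 - p.2) - p.2 * (q.1 - p.1)), ?_, ?_⟩
      · intro h
        rw [Prod.mk.injEq] at h
        obtain ⟨ha, hb⟩ := h
        have hsne : s ≠ 0 := ne_of_gt hs
        have e2 : q.2 - p.2 = 0 := by
          rcases mul_eq_zero.mp ha with h' | h'
          · exact absurd h' hsne
          · exact h'
        have e1 : q.1 - p.1 = 0 := by
          have : s * (q.1 - p.1) = 0 := by linarith [neg_eq_zero.mp hb]
          rcases mul_eq_zero.mp this with h' | h'
          · exact absurd h' hsne
          · exact h'
        exact hpq (Prod.ext (by linarith) (by linarith))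
      · intro i
        have hcross := cross_eq_zero_of_sameRay' (φ (x i)) (φ p) (φ q) (hall i)
        simp only [hφre, hφim] at hcross
        linear_combination hcross
    obtain ⟨j, hj⟩ := hwit
    have hle : ∀ i : Fin n, ‖φ (x i) - φ mid‖ ≤ (‖φ (x i) - φ p‖ + ‖φ (x i) - φ q‖) / 2 := by
      intro i
      rw [hφmid i]
      rw [norm_div]
      simp only [Complex.norm_ofNat]
      linarith [norm_add_le (φ (x i) - φ p) (φ (x i) - φ q)]
    have hlt : ‖φ (x j) - φ mid‖ < (‖φ (x j) - φ p‖ + ‖φ (x j) - φ q‖) / 2 := by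
      rw [hφmid j, norm_div]
      simp only [Complex.norm_ofNat]
      exact div_lt_div_of_pos_right (norm_add_lt_of_not_sameRay hj) two_pos
    calc F mid = ∑ i, ‖φ (x i) - φ mid‖ := rfl
      _ < ∑ i, (‖φ (x i) - φ p‖ + ‖φ (x i) - φ q‖) / 2 := by
          apply Finset.sum_lt_sum (fun i _ => hle i) ⟨j, Finset.mem_univ j, hlt⟩
      _ = (F p + F q) / 2 := by
          rw [← Finset.sum_div, Finset.sum_add_distrib]
  -- assemble
  refine ⟨m, ⟨hmK.1, hmin⟩, ?_⟩
  rintro m' ⟨hm'2, hm'min⟩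
  by_contra hne
  have hFeq : F m' = F m := le_antisymm (hm'min m hmK.1) (hmin m' hm'2)
  have hmid2 : (0 : ℝ) ≤ ((m'.2 + m.2) / 2) := by
    have h := hmK.1
    simp only [Set.mem_setOf_eq] at h
    linarith
  have h1 : F m' ≤ F ((m'.1 + m.1) / 2, (m'.2 + m.2) / 2) := hm'min _ hmid2
  have h2 := hstrict m' m hne
  linarith
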